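/- Let S, T1, T2 be subspaces of a finite-dimensional complex Hilbert space such that at least two of the three commutation relations S C T1, S C T2, T1 C T2 hold. Then the distributive laws hold: S ∧ (T1 ∨ T2) = (S ∧ T1) ∨ (S ∧ T2) and S ∨ (T1 ∧ T2) = (S ∨ T1) ∧ (S ∨ T2). -/

import Mathlib

/-- Two subspaces commute: `S C T` iff `S = (S ⊓ T) ⊔ (S ⊓ Tᗮ)`. -/
def SubspaceCommute {H : Type*} [NormedAddCommGroup H] [InnerProductSpace ℂ H]
    (S T : Submodule ℂ H) : Prop :=
  S = (S ⊓ T) ⊔ (S ⊓ Tᗮ)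

section Aux

variable {H : Type*} [NormedAddCommGroup H] [InnerProductSpace ℂ H]
  [FiniteDimensional ℂ H] {S T : Submodule ℂ H}

local notation "⟪" x ", " y "⟫" => @inner ℂ _ _ x y

/-- If `S C T` and `x ∈ S`, then the `T`-projection of `x` lies in `S ⊓ T` and the
remainder lies in `S ⊓ Tᗮ`. -/
lemma SubspaceCommute.proj_mem (h : SubspaceCommute S T) {x : H} (hx : x ∈ S) :
    (T.starProjection x : H) ∈ S ⊓ T ∧
      x - (T.starProjection x : H) ∈ S ⊓ Tᗮ := by
  rw [h] at hx
  obtain ⟨u, hu, v, hv, hx⟩ := Submodule.mem_sup.1 hx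
  have hP : (T.starProjection x : H) = u :=
    Submodule.eq_starProjection_of_mem_orthogonal' hu.2 hv.2 hx.symm
  rw [hP]
  refine ⟨hu, ?_⟩
  have : x - u = v := by rw [← hx]; abel
  rw [this]; exact hv

/-- If `S C T`, then the `S`-projection maps `Tᗮ` into `Tᗮ`. -/
lemma SubspaceCommute.proj_orth_mem (h : SubspaceCommute S T) {w : H} (hw : w ∈ Tᗮ) :
    (S.starProjection w : H) ∈ Tᗮ := by
  set y : H := (S.starProjection w : H) with hy
  have hyS : y ∈ S := S.starProjection_apply_mem w
  obtain ⟨hu, hv⟩ := h.proj_mem hyS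
  set u : H := (T.starProjection y : H) with hdefu
  have huzero : u = 0 := by
    have h1 : ⟪u, y - u⟫ = 0 :=
      Submodule.inner_right_of_mem_orthogonal hu.2 hv.2
    have h2 : ⟪u, y⟫ = ⟪u, u⟫ + ⟪u, y - u⟫ := by
      rw [← inner_add_right]; congr 1; abel
    have hPu : (S.starProjection u : H) = u :=
      Submodule.starProjection_eq_self_iff.2 hu.1
    have h3 : ⟪u, y⟫ = 0 := by
      rw [hy, ← Submodule.inner_starProjection_left_eq_right, hPu]
      exact Submodule.inner_right_of_mem_orthogonal hu.2 hw
    have : ⟪u, u⟫ = 0 := by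
      have := h2.symm.trans h3
      rwa [h1, add_zero] at this
    exact inner_self_eq_zero.1 this
  have : y - u ∈ Tᗮ := hv.2
  rwa [huzero, sub_zero] at this

/-- If `S C T`, then the `S`-projection maps `T` into `T`. -/
lemma SubspaceCommute.proj_mem_self (h : SubspaceCommute S T) {t : H} (ht : t ∈ T) :
    (S.starProjection t : H) ∈ T := by
  rw [← Submodule.orthogonal_orthogonal T]
  intro w hw
  rw [← Submodule.inner_starProjection_left_eq_right]
  exact Submodule.inner_left_of_mem_orthogonal ht (h.proj_orth_mem hw)

/-- Commutation of subspaces is symmetric. -/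
lemma SubspaceCommute.symm (h : SubspaceCommute S T) : SubspaceCommute T S := by
  refine le_antisymm (fun t ht => ?_) (sup_le inf_le_left inf_le_left)
  have h1 : (S.starProjection t : H) ∈ T := h.proj_mem_self ht
  refine Submodule.mem_sup.2 ⟨(S.starProjection t : H),
    ⟨h1, S.starProjection_apply_mem t⟩,
    t - (S.starProjection t : H),
    ⟨T.sub_mem ht h1, Submodule.sub_starProjection_mem_orthogonal t⟩, by abel⟩

/-- Commutation is preserved by orthocomplementing the second argument. -/
lemma SubspaceCommute.orth_right (h : SubspaceCommute S T) : SubspaceCommute S Tᗮ := by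
  rw [SubspaceCommute, Submodule.orthogonal_orthogonal, sup_comm]
  exact h

/-- Commutation is preserved by orthocomplementing both arguments. -/
lemma SubspaceCommute.orth_both (h : SubspaceCommute S T) : SubspaceCommute Sᗮ Tᗮ :=
  ((h.symm.orth_right).symm).orth_right

lemma sup_orthogonal' (K L : Submodule ℂ H) : Kᗮ ⊔ Lᗮ = (K ⊓ L)ᗮ := by
  rw [← Submodule.orthogonal_orthogonal (Kᗮ ⊔ Lᗮ), ← Submodule.inf_orthogonal,
    Submodule.orthogonal_orthogonal, Submodule.orthogonal_orthogonal]

/-- The meet-distributivity half. -/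
lemma meet_distrib (S T₁ T₂ : Submodule ℂ H)
    (h : (SubspaceCommute S T₁ ∧ SubspaceCommute S T₂) ∨
         (SubspaceCommute S T₁ ∧ SubspaceCommute T₁ T₂) ∨
         (SubspaceCommute S T₂ ∧ SubspaceCommute T₁ T₂)) :
    S ⊓ (T₁ ⊔ T₂) = (S ⊓ T₁) ⊔ (S ⊓ T₂) := by
  refine le_antisymm (fun x hx => ?_)
    (sup_le (le_inf inf_le_left (inf_le_right.trans le_sup_left))
      (le_inf inf_le_left (inf_le_right.trans le_sup_right)))
  obtain ⟨hxS, hxT⟩ := hx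
  obtain ⟨t₁, ht₁, t₂, ht₂, hx12⟩ := Submodule.mem_sup.1 hxT
  rcases h with ⟨h1, h2⟩ | ⟨h1, h12⟩ | ⟨h2, h12⟩
  · -- S C T₁ and S C T₂
    have hPx : (S.starProjection x : H) = x := Submodule.starProjection_eq_self_iff.2 hxS
    have hxeq : x = (S.starProjection t₁ : H) + (S.starProjection t₂ : H) := by
      rw [← hPx]
      conv_lhs => rw [← hx12]
      push_cast [map_add]
      ring
    have hm1 := h1.symm.proj_mem ht₁
    have hm2 := h2.symm.proj_mem ht₂
    exact Submodule.mem_sup.2 ⟨_, ⟨hm1.1.2, hm1.1.1⟩, _, ⟨hm2.1.2, hm2.1.1⟩, hxeq.symm⟩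
  · -- S C T₁ and T₁ C T₂
    obtain ⟨ha, hb⟩ := h1.proj_mem hxS
    have hbT2 : x - (T₁.starProjection x : H) ∈ T₂ := by
      have hPt1 : (T₁.starProjection t₁ : H) = t₁ :=
        Submodule.starProjection_eq_self_iff.2 ht₁
      have hrw : x - (T₁.starProjection x : H)
          = t₂ - (T₁.starProjection t₂ : H) := by
        conv_lhs => rw [← hx12]
        push_cast [map_add]
        rw [hPt1]; abel
      rw [hrw]
      exact T₂.sub_mem ht₂ (h12.proj_mem_self ht₂)
    exact Submodule.mem_sup.2 ⟨_, ha, _, ⟨hb.1, hbT2⟩, by abel⟩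
  · -- S C T₂ and T₁ C T₂
    obtain ⟨ha, hb⟩ := h2.proj_mem hxS
    have hbT1 : x - (T₂.starProjection x : H) ∈ T₁ := by
      have hPt2 : (T₂.starProjection t₂ : H) = t₂ :=
        Submodule.starProjection_eq_self_iff.2 ht₂
      have hrw : x - (T₂.starProjection x : H)
          = t₁ - (T₂.starProjection t₁ : H) := by
        conv_lhs => rw [← hx12]
        push_cast [map_add]
        rw [hPt2]; abel
      rw [hrw]
      exact T₁.sub_mem ht₁ (h12.proj_mem ht₁).1.1
    exact Submodule.mem_sup.2 ⟨_, ⟨hb.1, hbT1⟩, _, ha, by abel⟩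

end Aux

/-- If at least two of `S C T₁`, `S C T₂`, `T₁ C T₂` hold, then the distributive
laws hold: `S ⊓ (T₁ ⊔ T₂) = (S ⊓ T₁) ⊔ (S ⊓ T₂)` and
`S ⊔ (T₁ ⊓ T₂) = (S ⊔ T₁) ⊓ (S ⊔ T₂)`. -/
theorem distrib_of_two_commute {H : Type*} [NormedAddCommGroup H]
    [InnerProductSpace ℂ H] [FiniteDimensional ℂ H] (S T₁ T₂ : Submodule ℂ H)
    (h : (SubspaceCommute S T₁ ∧ SubspaceCommute S T₂) ∨
         (SubspaceCommute S T₁ ∧ SubspaceCommute T₁ T₂) ∨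
         (SubspaceCommute S T₂ ∧ SubspaceCommute T₁ T₂)) :
    S ⊓ (T₁ ⊔ T₂) = (S ⊓ T₁) ⊔ (S ⊓ T₂) ∧
    S ⊔ (T₁ ⊓ T₂) = (S ⊔ T₁) ⊓ (S ⊔ T₂) := by
  refine ⟨meet_distrib S T₁ T₂ h, ?_⟩
  have h' : (SubspaceCommute Sᗮ T₁ᗮ ∧ SubspaceCommute Sᗮ T₂ᗮ) ∨
      (SubspaceCommute Sᗮ T₁ᗮ ∧ SubspaceCommute T₁ᗮ T₂ᗮ) ∨
      (SubspaceCommute Sᗮ T₂ᗮ ∧ SubspaceCommute T₁ᗮ T₂ᗮ) := by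
    rcases h with ⟨h1, h2⟩ | ⟨h1, h2⟩ | ⟨h1, h2⟩
    · exact Or.inl ⟨h1.orth_both, h2.orth_both⟩
    · exact Or.inr (Or.inl ⟨h1.orth_both, h2.orth_both⟩)
    · exact Or.inr (Or.inr ⟨h1.orth_both, h2.orth_both⟩)
  have key := meet_distrib Sᗮ T₁ᗮ T₂ᗮ h'
  rw [sup_orthogonal', Submodule.inf_orthogonal, Submodule.inf_orthogonal,
    Submodule.inf_orthogonal, sup_orthogonal'] at key
  have key2 := congrArg (fun K : Submodule ℂ H => Kᗮ) key
  simpa only [Submodule.orthogonal_orthogonal] using key2
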